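/- Let D be an integral domain with quotient field K, S a multiplicative subset of D[X], and ∇(S) the set of prime ideals P of D maximal with respect to the property P[X] ∩ S = ∅. Then for every nonzero D-submodule E of K, E·D[X]_S ∩ K = ⋂_{P ∈ ∇(S)} E·D_P. -/

import Mathlib

set_option linter.unusedSectionVars false

open Polynomial Pointwise

variable {D K : Type*} [CommRing D] [IsDomain D] [Field K] [Algebra D K] [IsFractionRing D K]

/-- Auxiliary: if every `x * (coefficient of p)` lies in the `D`-submodule `E` of `K`,
then so does `x * (coefficient of p * q)`. -/
lemma mul_coeff_mem (E : Submodule D K) (x : K) (p q : D[X])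
    (h : ∀ m, x * algebraMap D K (p.coeff m) ∈ E) (n : ℕ) :
    x * algebraMap D K ((p * q).coeff n) ∈ E := by
  rw [Polynomial.coeff_mul, map_sum, Finset.mul_sum]
  refine Submodule.sum_mem _ fun ij _ => ?_
  have hm := E.smul_mem (q.coeff ij.2) (h ij.1)
  rw [Algebra.smul_def, mul_comm] at hm
  rw [map_mul, ← mul_assoc]
  exact hm

/-- The semistar operation `E ↦ E·D[X]_S ∩ K` induced by a multiplicative subset `S` of
`D[X]`: an element `x ∈ K` lies in `E·D[X]_S ∩ K` exactly when `x·g` has all its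
coefficients in `E` for some `g ∈ S`. -/
def circ (S : Submonoid D[X]) (E : Submodule D K) : Submodule D K where
  carrier := {x : K | ∃ g ∈ S, ∀ n, x * algebraMap D K (g.coeff n) ∈ E}
  zero_mem' := ⟨1, S.one_mem, fun n => by simp⟩
  add_mem' := by
    rintro a b ⟨g, hg, ha⟩ ⟨h, hh, hb⟩
    refine ⟨g * h, S.mul_mem hg hh, fun n => ?_⟩
    rw [add_mul]
    exact Submodule.add_mem E (mul_coeff_mem E a g h ha n)
      (by rw [mul_comm g h]; exact mul_coeff_mem E b h g hb n)
  smul_mem' := by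
    rintro d x ⟨g, hg, hx⟩
    exact ⟨g, hg, fun n => by rw [smul_mul_assoc]; exact E.smul_mem d (hx n)⟩

/-- `E·D_P`, the `D_P`-submodule of `K` generated by `E`, described elementwise. -/
def locDP (P : Ideal D) (E : Submodule D K) : Set K :=
  {x | ∃ s : D, s ∉ P ∧ algebraMap D K s * x ∈ E}

/-- `Δ(S)`: the primes `P` of `D` with `P[X] ∩ S = ∅`. -/
def DeltaS (S : Submonoid D[X]) : Set (Ideal D) :=
  {P | P.IsPrime ∧ ∀ g ∈ S, ∃ n, g.coeff n ∉ P}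

/-- `∇(S)`: the maximal elements of `Δ(S)`. -/
def NablaS (S : Submonoid D[X]) : Set (Ideal D) :=
  {P ∈ DeltaS S | ∀ Q ∈ DeltaS S, P ≤ Q → P = Q}


/-- Any ideal `I` with `I[X] ∩ S = ∅` is contained in some member of `∇(S)`. -/
lemma exists_nabla_ge (S : Submonoid D[X]) (I : Ideal D)
    (hI : ∀ g ∈ S, ∃ n, g.coeff n ∉ I) :
    ∃ P ∈ NablaS (D := D) S, I ≤ P := by
  set T : Set (Ideal D) := {J | ∀ g ∈ S, ∃ n, g.coeff n ∉ J} with hT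
  obtain ⟨P, hIP, hPT, hPmax⟩ : ∃ P, I ≤ P ∧ Maximal (· ∈ T) P := by
    refine zorn_le_nonempty₀ T (fun c hcT hc y hy => ?_) I hI
    have hcne : c.Nonempty := ⟨y, hy⟩
    have hdir : DirectedOn (· ≤ ·) c := hc.directedOn
    refine ⟨sSup c, ?_, fun z hz => le_sSup hz⟩
    intro g hg
    by_contra hcon
    push_neg at hcon
    have key : ∀ s : Finset ℕ, ∃ J ∈ c, ∀ n ∈ s, g.coeff n ∈ J := by
      intro s
      induction s using Finset.induction with
      | empty => exact ⟨y, hy, by simp⟩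
      | insert _ _ hns ih =>
        obtain ⟨J, hJ, hJs⟩ := ih
        obtain ⟨J', hJ', hJ'n⟩ :=
          (Submodule.mem_sSup_of_directed hcne hdir).1 (hcon _)
        obtain ⟨K', hK', hJK, hJ'K⟩ := hdir J hJ J' hJ'
        exact ⟨K', hK', fun n hn => by
          rcases Finset.mem_insert.1 hn with rfl | hn
          · exact hJ'K hJ'n
          · exact hJK (hJs n hn)⟩
    obtain ⟨J, hJ, hJs⟩ := key g.support
    obtain ⟨n, hn⟩ := hcT hJ g hg
    rcases Decidable.em (n ∈ g.support) with hns | hns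
    · exact hn (hJs n hns)
    · exact hn (by rw [Polynomial.notMem_support_iff.1 hns]; exact J.zero_mem)
  have hPprime : P.IsPrime := by
    constructor
    · intro htop
      obtain ⟨n, hn⟩ := hPT 1 S.one_mem
      exact hn (htop ▸ Submodule.mem_top)
    · intro a b hab
      by_contra hcon
      push_neg at hcon
      obtain ⟨ha, hb⟩ := hcon
      have key : ∀ d : D, d ∉ P → ∃ g ∈ S, ∀ n, g.coeff n ∈ P ⊔ Ideal.span {d} := by
        intro d hd
        by_contra hc
        push_neg at hc
        have hmem : (P ⊔ Ideal.span {d}) ∈ T := by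
          intro g hg
          obtain ⟨n, hn⟩ := hc g hg
          exact ⟨n, hn⟩
        exact hd (hPmax hmem le_sup_left
          (Ideal.mem_sup_right (Ideal.mem_span_singleton_self d)))
      obtain ⟨g, hg, hga⟩ := key a ha
      obtain ⟨h, hh, hhb⟩ := key b hb
      obtain ⟨n, hn⟩ := hPT (g * h) (S.mul_mem hg hh)
      apply hn
      rw [Polynomial.coeff_mul]
      refine Submodule.sum_mem _ fun ij _ => ?_
      obtain ⟨p, hp, q, hq, hpq⟩ := Submodule.mem_sup.1 (hga ij.1)
      obtain ⟨p', hp', q', hq', hpq'⟩ := Submodule.mem_sup.1 (hhb ij.2)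
      obtain ⟨da, rfl⟩ := Ideal.mem_span_singleton'.1 hq
      obtain ⟨db, rfl⟩ := Ideal.mem_span_singleton'.1 hq'
      rw [← hpq, ← hpq']
      have : (p + da * a) * (p' + db * b)
          = p * (p' + db * b) + da * (a * p') + (da * db) * (a * b) := by ring
      rw [this]
      exact P.add_mem (P.add_mem (P.mul_mem_right _ hp)
        (P.mul_mem_left _ (P.mul_mem_left _ hp'))) (P.mul_mem_left _ hab)
  refine ⟨P, ⟨⟨hPprime, hPT⟩, fun Q hQ hPQ => le_antisymm hPQ (hPmax hQ.2 hPQ)⟩, hIP⟩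

/-- `E·D[X]_S ∩ K = ⋂_{P ∈ ∇(S)} E·D_P`. -/
theorem circ_eq_iInter_locDP (S : Submonoid D[X]) (E : Submodule D K) (hE : E ≠ ⊥) :
    (circ S E : Set K) = ⋂ P ∈ NablaS (D := D) S, locDP P E := by
  ext x
  simp only [SetLike.mem_coe, Set.mem_iInter]
  constructor
  · rintro ⟨g, hg, hx⟩ P hP
    obtain ⟨n, hn⟩ := hP.1.2 g hg
    exact ⟨g.coeff n, hn, by rw [mul_comm]; exact hx n⟩
  · intro h
    set I : Ideal D :=
      { carrier := {d | x * algebraMap D K d ∈ E}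
        zero_mem' := by simp
        add_mem' := fun ha hb => by
          simpa [map_add, mul_add] using E.add_mem ha hb
        smul_mem' := fun d a ha => by
          have := E.smul_mem d ha
          rw [Algebra.smul_def] at this
          simpa [map_mul, mul_comm, mul_assoc, mul_left_comm] using this } with hI
    by_contra hcon
    simp only [circ, Submodule.mem_mk, AddSubmonoid.mem_mk, AddSubsemigroup.mem_mk,
      Set.mem_setOf_eq, not_exists] at hcon
    have hIS : ∀ g ∈ S, ∃ n, g.coeff n ∉ I := by
      intro g hg
      by_contra hc
      push_neg at hc
      exact (hcon g) ⟨hg, fun n => hc n⟩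
    obtain ⟨P, hP, hIP⟩ := exists_nabla_ge S I hIS
    obtain ⟨s, hs, hsx⟩ := h P hP
    exact hs (hIP (by rw [mul_comm] at hsx; exact hsx))
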